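/- arXiv:2212.13343 — 2 statements merged into one kernel-verified Lean document; each statement's English description precedes it below -/
import Mathlib

section
/- Let N ≥ 1 and M > 0. There exists a constant C = C(N,M) > 0 such that for every nonnegative function ρ ∈ L^∞(ℝ²) with ∫_{B_N} ρ dx ≥ M and every continuously differentiable function v : ℝ² → ℝ with ∇v ∈ L²(ℝ²) and √ρ·v ∈ L²(ℝ²), one has ‖v‖_{L²(B_N)} ≤ C‖√ρ v‖_{L²(ℝ²)} + C(‖ρ‖_{L^∞(ℝ²)}^{1/2} + 1)‖∇v‖_{L²(ℝ²)}. -/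
open MeasureTheory Real Set Metric

noncomputable section

abbrev E2 := EuclideanSpace ℝ (Fin 2)


lemma scale_lintegral (g : E2 → ENNReal) (hg : Measurable g) (c : ℝ) (hc : c ≠ 0) (b : E2) :
    ∫⁻ z, g (c • z + b) = ENNReal.ofReal |(c^2)⁻¹| * ∫⁻ z, g z := by
  calc ∫⁻ z, g (c • z + b)
      = ∫⁻ w, g (w + b) ∂(Measure.map (c • ·) volume) := by
        rw [lintegral_map (f := fun w => g (w + b)) (hg.comp (measurable_add_const b))
          (measurable_const_smul c)]
    _ = ENNReal.ofReal |(c^2)⁻¹| * ∫⁻ z, g z := by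
        rw [Measure.map_addHaar_smul volume hc, lintegral_smul_measure,
          lintegral_add_right_eq_self]
        congr 2
        simp [finrank_euclideanSpace]

lemma scale_bound (g : E2 → ENNReal) (hg : Measurable g) (c : ℝ) (hc : 1/2 ≤ |c|) (b : E2)
    (s : Set E2) : ∫⁻ z in s, g (c • z + b) ≤ 4 * ∫⁻ z, g z := by
  have hc0 : c ≠ 0 := by
    intro h; rw [h] at hc; simp at hc; linarith
  calc ∫⁻ z in s, g (c • z + b) ≤ ∫⁻ z, g (c • z + b) := setLIntegral_le_lintegral _ _
    _ = ENNReal.ofReal |(c^2)⁻¹| * ∫⁻ z, g z := scale_lintegral g hg c hc0 b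
    _ ≤ 4 * ∫⁻ z, g z := by
        apply mul_le_mul_left
        have h1 : (c^2)⁻¹ ≤ 4 := by
          rw [← sq_abs]
          have h2 : (1/2:ℝ)^2 ≤ |c|^2 := by
            apply pow_le_pow_left₀ (by norm_num) hc
          rw [inv_le_comm₀ (by positivity) (by norm_num)]
          calc (4:ℝ)⁻¹ = (1/2)^2 := by norm_num
            _ ≤ |c|^2 := h2
        calc ENNReal.ofReal |(c^2)⁻¹| ≤ ENNReal.ofReal 4 :=
              ENNReal.ofReal_le_ofReal (le_trans (le_of_eq (abs_of_nonneg (by positivity))) h1)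
          _ = 4 := by norm_num

lemma triple_bound (g : E2 → ENNReal) (hg : Measurable g) (N : ℝ) :
    ∫⁻ y in ball (0:E2) N, ∫⁻ x in ball (0:E2) N, ∫⁻ t in Ioc (0:ℝ) 1,
        g (t • x + (1-t) • y) ≤
      8 * volume (ball (0:E2) N) * ∫⁻ z, g z := by
  set D := ball (0:E2) N
  set G := ∫⁻ z, g z with hG
  set vol := volume D with hvol
  have hmap : Measurable fun p : (E2 × E2) × ℝ => g (p.2 • p.1.2 + (1 - p.2) • p.1.1) := by
    apply hg.comp
    fun_prop
  -- split the t-interval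
  have hsplit : ∀ x y : E2, (∫⁻ t in Ioc (0:ℝ) 1, g (t • x + (1-t) • y)) =
      (∫⁻ t in Ioc (0:ℝ) (1/2), g (t • x + (1-t) • y)) +
      (∫⁻ t in Ioc (1/2:ℝ) 1, g (t • x + (1-t) • y)) := by
    intro x y
    rw [← lintegral_union measurableSet_Ioc (Ioc_disjoint_Ioc_of_le le_rfl),
      Ioc_union_Ioc_eq_Ioc (by norm_num) (by norm_num)]
  -- measurability helpers
  have hmxt : ∀ y : E2, Measurable fun p : E2 × ℝ => g (p.2 • p.1 + (1 - p.2) • y) := by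
    intro y; apply hg.comp; fun_prop
  have hmyx : ∀ t : ℝ, Measurable fun p : E2 × E2 => g (t • p.2 + (1 - t) • p.1) := by
    intro t; apply hg.comp; fun_prop
  have hWa : ∀ (y : E2) (I : Set ℝ), Measurable fun x : E2 =>
      ∫⁻ t in I, g (t • x + (1-t) • y) := by
    intro y I
    exact (hmxt y).lintegral_prod_right'
  have hmyt : Measurable fun p : E2 × ℝ => ∫⁻ x in D, g (p.2 • x + (1 - p.2) • p.1) := by
    apply Measurable.lintegral_prod_right' (f := fun q : (E2 × ℝ) × E2 =>
      g (q.1.2 • q.2 + (1 - q.1.2) • q.1.1))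
    apply hg.comp; fun_prop
  have hKa : ∀ I : Set ℝ, Measurable fun y : E2 =>
      ∫⁻ x in D, ∫⁻ t in I, g (t • x + (1-t) • y) := by
    intro I
    apply Measurable.lintegral_prod_right' (f := fun q : E2 × E2 =>
      ∫⁻ t in I, g (t • q.2 + (1-t) • q.1))
    apply Measurable.lintegral_prod_right' (f := fun q : (E2 × E2) × ℝ =>
      g (q.2 • q.1.2 + (1 - q.2) • q.1.1))
    exact hmap
  -- swap t and x (for fixed y)
  have hswapxt : ∀ (y : E2) (I : Set ℝ) (_ : MeasurableSet I),
      (∫⁻ x in D, ∫⁻ t in I, g (t • x + (1-t) • y)) =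
      ∫⁻ t in I, ∫⁻ x in D, g (t • x + (1-t) • y) := by
    intro y I _
    exact lintegral_lintegral_swap ((hmxt y).aemeasurable)
  -- bound for T2
  have hT2 : (∫⁻ y in D, ∫⁻ x in D, ∫⁻ t in Ioc (1/2:ℝ) 1, g (t • x + (1-t) • y)) ≤
      4 * vol * G := by
    calc ∫⁻ y in D, ∫⁻ x in D, ∫⁻ t in Ioc (1/2:ℝ) 1, g (t • x + (1-t) • y)
        = ∫⁻ y in D, ∫⁻ t in Ioc (1/2:ℝ) 1, ∫⁻ x in D, g (t • x + (1-t) • y) := by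
          exact lintegral_congr fun y => hswapxt y _ measurableSet_Ioc
      _ ≤ ∫⁻ y in D, ∫⁻ t in Ioc (1/2:ℝ) 1, 4 * G := by
          refine lintegral_mono fun y => ?_
          refine lintegral_mono_ae ?_
          filter_upwards [ae_restrict_mem measurableSet_Ioc] with t ht
          have : 1/2 ≤ |t| := by rw [abs_of_pos (by linarith [ht.1])]; exact le_of_lt ht.1
          exact scale_bound g hg t this ((1-t) • y) D
      _ ≤ ∫⁻ _ in D, 4 * G := by
          refine lintegral_mono fun y => ?_
          rw [setLIntegral_const]
          calc 4 * G * volume (Ioc (1/2:ℝ) 1) ≤ 4 * G * 1 := by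
                apply mul_le_mul_right
                rw [Real.volume_Ioc]
                exact ENNReal.ofReal_le_one.mpr (by norm_num)
            _ = 4 * G := mul_one _
      _ = 4 * G * vol := setLIntegral_const _ _
      _ = 4 * vol * G := by ring
  -- bound for T1
  have hT1 : (∫⁻ y in D, ∫⁻ x in D, ∫⁻ t in Ioc (0:ℝ) (1/2), g (t • x + (1-t) • y)) ≤
      4 * vol * G := by
    calc ∫⁻ y in D, ∫⁻ x in D, ∫⁻ t in Ioc (0:ℝ) (1/2), g (t • x + (1-t) • y)
        = ∫⁻ y in D, ∫⁻ t in Ioc (0:ℝ) (1/2), ∫⁻ x in D, g (t • x + (1-t) • y) := by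
          exact lintegral_congr fun y => hswapxt y _ measurableSet_Ioc
      _ = ∫⁻ t in Ioc (0:ℝ) (1/2), ∫⁻ y in D, ∫⁻ x in D, g (t • x + (1-t) • y) := by
          exact lintegral_lintegral_swap hmyt.aemeasurable
      _ = ∫⁻ t in Ioc (0:ℝ) (1/2), ∫⁻ x in D, ∫⁻ y in D, g (t • x + (1-t) • y) := by
          refine lintegral_congr fun t => ?_
          exact lintegral_lintegral_swap ((hmyx t).aemeasurable)
      _ ≤ ∫⁻ t in Ioc (0:ℝ) (1/2), ∫⁻ x in D, 4 * G := by
          refine lintegral_mono_ae ?_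
          filter_upwards [ae_restrict_mem measurableSet_Ioc] with t ht
          refine lintegral_mono fun x => ?_
          have h12 : 1/2 ≤ |1 - t| := by
            rw [abs_of_nonneg (by linarith [ht.2])]; linarith [ht.2]
          have := scale_bound g hg (1-t) h12 (t • x) D
          calc (∫⁻ y in D, g (t • x + (1-t) • y))
              = ∫⁻ y in D, g ((1-t) • y + t • x) := by
                apply lintegral_congr fun y => by rw [add_comm]
            _ ≤ 4 * G := this
      _ ≤ 4 * vol * G := by
          rw [setLIntegral_const, setLIntegral_const]
          calc 4 * G * vol * volume (Ioc (0:ℝ) (1/2)) ≤ 4 * G * vol * 1 := by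
                apply mul_le_mul_right
                rw [Real.volume_Ioc]
                exact ENNReal.ofReal_le_one.mpr (by norm_num)
            _ = 4 * vol * G := by ring
  calc ∫⁻ y in D, ∫⁻ x in D, ∫⁻ t in Ioc (0:ℝ) 1, g (t • x + (1-t) • y)
      = ∫⁻ y in D, ∫⁻ x in D, ((∫⁻ t in Ioc (0:ℝ) (1/2), g (t • x + (1-t) • y)) +
        ∫⁻ t in Ioc (1/2:ℝ) 1, g (t • x + (1-t) • y)) := by
        exact lintegral_congr fun y => lintegral_congr fun x => hsplit x y
    _ = ∫⁻ y in D, ((∫⁻ x in D, ∫⁻ t in Ioc (0:ℝ) (1/2), g (t • x + (1-t) • y)) +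
        ∫⁻ x in D, ∫⁻ t in Ioc (1/2:ℝ) 1, g (t • x + (1-t) • y)) := by
        exact lintegral_congr fun y => lintegral_add_left (hWa y _) _
    _ = (∫⁻ y in D, ∫⁻ x in D, ∫⁻ t in Ioc (0:ℝ) (1/2), g (t • x + (1-t) • y)) +
        ∫⁻ y in D, ∫⁻ x in D, ∫⁻ t in Ioc (1/2:ℝ) 1, g (t • x + (1-t) • y) := by
        exact lintegral_add_left (hKa _) _
    _ ≤ 4 * vol * G + 4 * vol * G := add_le_add hT1 hT2
    _ = 8 * vol * G := by ring


lemma lint_sq (f : ℝ → ENNReal) (hf : AEMeasurable f (volume.restrict (Ioc (0:ℝ) 1))) :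
    (∫⁻ t in Ioc (0:ℝ) 1, f t) ^ 2 ≤ ∫⁻ t in Ioc (0:ℝ) 1, (f t) ^ 2 := by
  have hpq : Real.HolderConjugate 2 2 := Real.HolderConjugate.two_two
  have h := ENNReal.lintegral_mul_le_Lp_mul_Lq (volume.restrict (Ioc (0:ℝ) 1)) hpq hf
    aemeasurable_const (g := fun _ => 1)
  simp only [mul_one, Pi.mul_apply, ENNReal.one_rpow, lintegral_const,
    Measure.restrict_apply_univ, Real.volume_Ioc] at h
  norm_num at h
  calc (∫⁻ t in Ioc (0:ℝ) 1, f t) ^ 2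
      ≤ ((∫⁻ t in Ioc (0:ℝ) 1, f t ^ (2:ℕ)) ^ ((1:ℝ)/2)) ^ 2 := pow_le_pow_left' h 2
    _ = ∫⁻ t in Ioc (0:ℝ) 1, (f t) ^ 2 := by
      rw [← ENNReal.rpow_natCast _ 2, ← ENNReal.rpow_mul]
      norm_num

lemma line_deriv (x y : E2) (s : ℝ) :
    HasDerivAt (fun s : ℝ => s • x + (1 - s) • y) (x - y) s := by
  have h1 : HasDerivAt (fun s : ℝ => s • x) ((1:ℝ) • x) s :=
    (hasDerivAt_id s).smul_const x
  have h2 : HasDerivAt (fun s : ℝ => (1 - s) • y) ((0 - 1 : ℝ) • y) s :=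
    ((hasDerivAt_const s (1:ℝ)).sub (hasDerivAt_id s)).smul_const y
  exact (h1.add h2).congr_deriv (by simp [sub_eq_add_neg])

lemma ftc_line (v : E2 → ℝ) (hv : ContDiff ℝ 1 v) (x y : E2) :
    v x - v y = ∫ t in (0:ℝ)..1, (fderiv ℝ v (t • x + (1 - t) • y)) (x - y) := by
  have hd : ∀ t ∈ uIcc (0:ℝ) 1, HasDerivAt (fun s : ℝ => v (s • x + (1 - s) • y))
      ((fderiv ℝ v (t • x + (1 - t) • y)) (x - y)) t := fun t _ =>
    ((hv.differentiable one_ne_zero _).hasFDerivAt).comp_hasDerivAt t (line_deriv x y t)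
  have hcont : Continuous fun t : ℝ => (fderiv ℝ v (t • x + (1 - t) • y)) (x - y) := by
    have : Continuous (fderiv ℝ v) := hv.continuous_fderiv one_ne_zero
    exact ((this.comp (by continuity)).clm_apply continuous_const)
  have := intervalIntegral.integral_eq_sub_of_hasDerivAt hd
    (hcont.intervalIntegrable 0 1)
  rw [this]
  norm_num

lemma sq_diff_bound (v : E2 → ℝ) (hv : ContDiff ℝ 1 v) (x y : E2) :
    ENNReal.ofReal ((v x - v y)^2) ≤ ENNReal.ofReal (‖x - y‖^2) *
      ∫⁻ t in Ioc (0:ℝ) 1, ENNReal.ofReal (‖fderiv ℝ v (t • x + (1 - t) • y)‖^2) := by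
  set u : ℝ → ℝ := fun t => ‖fderiv ℝ v (t • x + (1 - t) • y)‖ with hu
  have hucont : Continuous u := by
    have : Continuous (fderiv ℝ v) := hv.continuous_fderiv one_ne_zero
    exact (this.comp (by continuity)).norm
  have hunn : ∀ t, 0 ≤ u t := fun t => norm_nonneg _
  -- step 1
  have step1 : |v x - v y| ≤ (∫ t in (0:ℝ)..1, u t) * ‖x - y‖ := by
    rw [ftc_line v hv x y]
    calc |∫ t in (0:ℝ)..1, (fderiv ℝ v (t • x + (1 - t) • y)) (x - y)|
        ≤ ∫ t in (0:ℝ)..1, ‖(fderiv ℝ v (t • x + (1 - t) • y)) (x - y)‖ :=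
          intervalIntegral.abs_integral_le_integral_abs zero_le_one
      _ ≤ ∫ t in (0:ℝ)..1, u t * ‖x - y‖ := by
          apply intervalIntegral.integral_mono_on zero_le_one
          · have : Continuous (fderiv ℝ v) := hv.continuous_fderiv one_ne_zero
            exact (((this.comp (by continuity)).clm_apply continuous_const).norm).intervalIntegrable 0 1
          · exact (hucont.mul continuous_const).intervalIntegrable 0 1
          · intro t _
            exact ContinuousLinearMap.le_opNorm _ _
      _ = (∫ t in (0:ℝ)..1, u t) * ‖x - y‖ := intervalIntegral.integral_mul_const _ _
  -- step 2
  have step2 : (v x - v y)^2 ≤ (∫ t in (0:ℝ)..1, u t)^2 * ‖x - y‖^2 := by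
    rw [← mul_pow, ← sq_abs]
    exact pow_le_pow_left₀ (abs_nonneg _) step1 2
  -- ENNReal conversion
  have hIoc : (∫ t in (0:ℝ)..1, u t) = ∫ t in Ioc (0:ℝ) 1, u t :=
    intervalIntegral.integral_of_le zero_le_one
  have hint : IntegrableOn u (Ioc (0:ℝ) 1) := by
    rw [← intervalIntegrable_iff_integrableOn_Ioc_of_le zero_le_one]
    exact hucont.intervalIntegrable 0 1
  have step3 : ENNReal.ofReal (∫ t in Ioc (0:ℝ) 1, u t) = ∫⁻ t in Ioc (0:ℝ) 1,
      ENNReal.ofReal (u t) :=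
    MeasureTheory.ofReal_integral_eq_lintegral_ofReal hint
      (Filter.Eventually.of_forall hunn)
  calc ENNReal.ofReal ((v x - v y)^2)
      ≤ ENNReal.ofReal ((∫ t in (0:ℝ)..1, u t)^2 * ‖x - y‖^2) := ENNReal.ofReal_le_ofReal step2
    _ = ENNReal.ofReal (‖x - y‖^2) * ENNReal.ofReal ((∫ t in (0:ℝ)..1, u t)^2) := by
        rw [mul_comm, ENNReal.ofReal_mul (by positivity)]
    _ ≤ ENNReal.ofReal (‖x - y‖^2) *
        ∫⁻ t in Ioc (0:ℝ) 1, ENNReal.ofReal (‖fderiv ℝ v (t • x + (1 - t) • y)‖^2) := by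
        apply mul_le_mul_right
        have hnn : 0 ≤ ∫ t in Ioc (0:ℝ) 1, u t := integral_nonneg fun t => hunn t
        rw [hIoc, ENNReal.ofReal_pow hnn, step3]
        calc (∫⁻ t in Ioc (0:ℝ) 1, ENNReal.ofReal (u t)) ^ 2
            ≤ ∫⁻ t in Ioc (0:ℝ) 1, (ENNReal.ofReal (u t))^2 :=
              lint_sq _ (ENNReal.measurable_ofReal.comp hucont.measurable).aemeasurable
          _ = _ := by
              congr 1; ext t
              rw [← ENNReal.ofReal_pow (hunn t)]


lemma my_sqrt_add_le (a b : ℝ) (ha : 0 ≤ a) (hb : 0 ≤ b) :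
    Real.sqrt (a + b) ≤ Real.sqrt a + Real.sqrt b := by
  have h := Real.sqrt_le_sqrt (show a + b ≤ (Real.sqrt a + Real.sqrt b)^2 by
    nlinarith [Real.sq_sqrt ha, Real.sq_sqrt hb, Real.sqrt_nonneg a, Real.sqrt_nonneg b])
  rwa [Real.sqrt_sq (by positivity)] at h

/-- Poincaré-type estimate on the ball B_N for functions with positive mass of ρ
(inequality (e4) in Lemma 2.4 of the paper). -/
theorem ball_estimate_with_density (N M : ℝ) (hN : 1 ≤ N) (hM : 0 < M) :
    ∃ C : ℝ, 0 < C ∧ ∀ ρ : E2 → ℝ, (∀ x, 0 ≤ ρ x) → MemLp ρ ⊤ volume →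
      M ≤ ∫ x in ball (0 : E2) N, ρ x →
      ∀ v : E2 → ℝ, ContDiff ℝ 1 v →
        Integrable (fun x => ‖fderiv ℝ v x‖ ^ 2) →
        Integrable (fun x => ρ x * (v x) ^ 2) →
        (∫ x in ball (0 : E2) N, (v x) ^ 2) ^ (1 / 2 : ℝ) ≤
          C * (∫ x : E2, ρ x * (v x) ^ 2) ^ (1 / 2 : ℝ) +
          C * ((eLpNorm ρ ⊤ volume).toReal ^ (1 / 2 : ℝ) + 1) *
            (∫ x : E2, ‖fderiv ℝ v x‖ ^ 2) ^ (1 / 2 : ℝ) := by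
  set D := ball (0:E2) N with hD
  have hDmeas : MeasurableSet D := measurableSet_ball
  have hvol_ne : volume D ≠ ⊤ := measure_ball_lt_top.ne
  set volR := (volume D).toReal with hvolR
  have hvolR0 : 0 ≤ volR := ENNReal.toReal_nonneg
  refine ⟨Real.sqrt (2*volR/M) + Real.sqrt (64*N^2*volR/M) + 1, by positivity, ?_⟩
  intro ρ hρ0 hρmem hρM v hv hIg hIρv
  set g : E2 → ENNReal := fun z => ENNReal.ofReal (‖fderiv ℝ v z‖^2) with hg
  have hfc : Continuous (fderiv ℝ v) := hv.continuous_fderiv one_ne_zero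
  have hgmeas : Measurable g :=
    ENNReal.measurable_ofReal.comp ((hfc.norm.pow 2).measurable)
  set Pf : E2 → ENNReal := fun y => ENNReal.ofReal (ρ y) with hPf
  set Vf : E2 → ENNReal := fun x => ENNReal.ofReal (v x ^ 2) with hVf
  have hVmeas : Measurable Vf :=
    ENNReal.measurable_ofReal.comp ((hv.continuous.pow 2).measurable)
  have hPaemeas : AEMeasurable Pf volume :=
    ENNReal.measurable_ofReal.comp_aemeasurable hρmem.aestronglyMeasurable.aemeasurable
  -- integrability of v^2 on D
  have hIvD : IntegrableOn (fun x => v x ^ 2) D volume := by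
    apply IntegrableOn.mono_set (t := Metric.closedBall (0:E2) N) ?_ ball_subset_closedBall
    exact ((hv.continuous.pow 2).continuousOn).integrableOn_compact (isCompact_closedBall _ _)
  set Iv := ∫ x in D, v x ^ 2 with hIvdef
  set Iρ := ∫ x : E2, ρ x * v x ^ 2 with hIρdef
  set Igr := ∫ x : E2, ‖fderiv ℝ v x‖ ^ 2 with hIgdef
  have hIv0 : 0 ≤ Iv := integral_nonneg fun x => sq_nonneg _
  have hIρ0 : 0 ≤ Iρ := integral_nonneg fun x => mul_nonneg (hρ0 x) (sq_nonneg _)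
  have hIg0 : 0 ≤ Igr := integral_nonneg fun x => sq_nonneg _
  have hA : (∫⁻ x in D, Vf x) = ENNReal.ofReal Iv :=
    (MeasureTheory.ofReal_integral_eq_lintegral_ofReal hIvD
      (Filter.Eventually.of_forall fun x => sq_nonneg _)).symm
  have hQ : (∫⁻ x, ENNReal.ofReal (ρ x * v x ^ 2)) = ENNReal.ofReal Iρ :=
    (MeasureTheory.ofReal_integral_eq_lintegral_ofReal hIρv
      (Filter.Eventually.of_forall fun x => mul_nonneg (hρ0 x) (sq_nonneg _))).symm
  have hG : (∫⁻ z, g z) = ENNReal.ofReal Igr :=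
    (MeasureTheory.ofReal_integral_eq_lintegral_ofReal hIg
      (Filter.Eventually.of_forall fun x => sq_nonneg _)).symm
  set R := eLpNorm ρ ⊤ volume with hRdef
  have hRne : R ≠ ⊤ := hρmem.2.ne
  have hPle : ∀ᵐ y ∂(volume : Measure E2), Pf y ≤ R := by
    rw [hRdef, eLpNorm_exponent_top]
    filter_upwards [ae_le_eLpNormEssSup (f := ρ) (μ := volume)] with y hy
    exact le_trans (Real.ofReal_le_enorm (ρ y)) hy
  -- mass lower bound
  have hfinD : IsFiniteMeasure (volume.restrict D) :=
    ⟨by rw [Measure.restrict_apply_univ]; exact measure_ball_lt_top⟩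
  have hρint : IntegrableOn ρ D volume :=
    memLp_one_iff_integrable.mp ((hρmem.restrict D).mono_exponent le_top)
  have hM1 : ENNReal.ofReal M ≤ ∫⁻ y in D, Pf y := by
    calc ENNReal.ofReal M ≤ ENNReal.ofReal (∫ y in D, ρ y) := ENNReal.ofReal_le_ofReal hρM
      _ = ∫⁻ y in D, Pf y := MeasureTheory.ofReal_integral_eq_lintegral_ofReal hρint
          (Filter.Eventually.of_forall fun x => hρ0 x)
  -- pointwise bound
  have hpoint : ∀ x ∈ D, ∀ y ∈ D, Vf x ≤ 2 * Vf y +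
      ENNReal.ofReal (8*N^2) * ∫⁻ t in Ioc (0:ℝ) 1, g (t • x + (1-t) • y) := by
    intro x hx y hy
    have hxn : ‖x‖ < N := mem_ball_zero_iff.mp hx
    have hyn : ‖y‖ < N := mem_ball_zero_iff.mp hy
    have hxy : ‖x - y‖^2 ≤ 4*N^2 := by
      have h1 : ‖x - y‖ ≤ 2*N := le_trans (norm_sub_le x y) (by linarith)
      nlinarith [norm_nonneg (x - y)]
    have hsq : v x ^ 2 ≤ 2 * v y ^ 2 + 2 * (v x - v y)^2 := by nlinarith [sq_nonneg (v x - 2 * v y)]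
    calc Vf x ≤ ENNReal.ofReal (2 * v y ^ 2 + 2 * (v x - v y)^2) := ENNReal.ofReal_le_ofReal hsq
      _ = 2 * Vf y + ENNReal.ofReal 2 * ENNReal.ofReal ((v x - v y)^2) := by
          rw [ENNReal.ofReal_add (by positivity) (by positivity), ENNReal.ofReal_mul (by norm_num),
            ENNReal.ofReal_mul (by norm_num)]
          norm_num [hVf]
      _ ≤ 2 * Vf y + ENNReal.ofReal 2 * (ENNReal.ofReal (‖x - y‖^2) *
            ∫⁻ t in Ioc (0:ℝ) 1, g (t • x + (1-t) • y)) := by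
          gcongr
          exact sq_diff_bound v hv x y
      _ ≤ 2 * Vf y + ENNReal.ofReal (8*N^2) * ∫⁻ t in Ioc (0:ℝ) 1, g (t • x + (1-t) • y) := by
          rw [← mul_assoc, ← ENNReal.ofReal_mul (by norm_num)]
          exact add_le_add_right (mul_le_mul_left (ENNReal.ofReal_le_ofReal (by nlinarith)) _) _
  -- measurability of inner double integral
  have hWmeas : ∀ y : E2, Measurable fun x : E2 =>
      ∫⁻ t in Ioc (0:ℝ) 1, g (t • x + (1-t) • y) := by
    intro y
    apply Measurable.lintegral_prod_right' (f := fun p : E2 × ℝ => g (p.2 • p.1 + (1 - p.2) • y))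
    apply hgmeas.comp; fun_prop
  set c8 : ENNReal := ENNReal.ofReal (8*N^2) with hc8
  have hc8ne : c8 ≠ ⊤ := ENNReal.ofReal_ne_top
  set A := ∫⁻ x in D, Vf x with hAdef
  have hAne : A ≠ ⊤ := by rw [hA]; exact ENNReal.ofReal_ne_top
  set W : E2 → ENNReal := fun y => ∫⁻ x in D, ∫⁻ t in Ioc (0:ℝ) 1, g (t • x + (1-t) • y)
    with hWdef
  have main : ENNReal.ofReal M * A ≤
      2 * volume D * ENNReal.ofReal Iρ + R * c8 * (8 * volume D * ENNReal.ofReal Igr) := by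
    calc ENNReal.ofReal M * A
        ≤ (∫⁻ y in D, Pf y) * A := mul_le_mul_left hM1 _
      _ = ∫⁻ y in D, Pf y * A := (lintegral_mul_const' A Pf hAne).symm
      _ = ∫⁻ y in D, ∫⁻ x in D, Pf y * Vf x :=
          lintegral_congr fun y => (lintegral_const_mul' _ _ ENNReal.ofReal_ne_top).symm
      _ ≤ ∫⁻ y in D, ∫⁻ x in D, Pf y * (2 * Vf y + c8 *
            ∫⁻ t in Ioc (0:ℝ) 1, g (t • x + (1-t) • y)) := by
          refine lintegral_mono_ae ?_
          filter_upwards [ae_restrict_mem hDmeas] with y hy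
          refine lintegral_mono_ae ?_
          filter_upwards [ae_restrict_mem hDmeas] with x hx
          exact mul_le_mul_right (hpoint x hx y hy) _
      _ = ∫⁻ y in D, (Pf y * (2 * Vf y * volume D) + Pf y * (c8 * W y)) := by
          refine lintegral_congr fun y => ?_
          rw [lintegral_const_mul' _ _ ENNReal.ofReal_ne_top,
            lintegral_add_left measurable_const, setLIntegral_const,
            lintegral_const_mul' c8 _ hc8ne, mul_add]
      _ ≤ ∫⁻ y in D, (Pf y * (2 * Vf y * volume D) + R * (c8 * W y)) := by
          refine lintegral_mono_ae ?_
          filter_upwards [ae_restrict_of_ae hPle] with y hy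
          exact add_le_add_right (mul_le_mul_left hy _) _
      _ = (∫⁻ y in D, Pf y * (2 * Vf y * volume D)) + ∫⁻ y in D, R * (c8 * W y) := by
          apply lintegral_add_left'
          exact (hPaemeas.restrict.mul (((hVmeas.const_mul 2).mul_const
            (volume D)).aemeasurable))
      _ ≤ 2 * volume D * ENNReal.ofReal Iρ + R * c8 * (8 * volume D * ENNReal.ofReal Igr) := by
          gcongr
          · -- first term
            calc ∫⁻ y in D, Pf y * (2 * Vf y * volume D)
                = ∫⁻ y in D, (2 * volume D) * (Pf y * Vf y) := by
                  refine lintegral_congr fun y => by ring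
              _ = (2 * volume D) * ∫⁻ y in D, Pf y * Vf y :=
                  lintegral_const_mul' _ _ (by
                    exact ENNReal.mul_ne_top (by norm_num) hvol_ne)
              _ ≤ (2 * volume D) * ∫⁻ y, Pf y * Vf y := by
                  exact mul_le_mul_right (setLIntegral_le_lintegral _ _) _
              _ = 2 * volume D * ENNReal.ofReal Iρ := by
                  rw [← hQ]
                  congr 1
                  refine lintegral_congr fun y => ?_
                  rw [← ENNReal.ofReal_mul (hρ0 y)]
          · -- second term
            calc ∫⁻ y in D, R * (c8 * W y)
                = ∫⁻ y in D, (R * c8) * W y := by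
                  refine lintegral_congr fun y => by ring
              _ = (R * c8) * ∫⁻ y in D, W y :=
                  lintegral_const_mul' _ _ (ENNReal.mul_ne_top hRne hc8ne)
              _ ≤ (R * c8) * (8 * volume D * ∫⁻ z, g z) :=
                  mul_le_mul_right (triple_bound g hgmeas N) _
              _ = R * c8 * (8 * volume D * ENNReal.ofReal Igr) := by rw [hG]
  -- convert to reals
  set Rr := R.toReal with hRr
  have hRr0 : 0 ≤ Rr := ENNReal.toReal_nonneg
  have hrhs_ne : 2 * volume D * ENNReal.ofReal Iρ +
      R * c8 * (8 * volume D * ENNReal.ofReal Igr) ≠ ⊤ := by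
    apply ENNReal.add_ne_top.mpr
    constructor
    · exact ENNReal.mul_ne_top (ENNReal.mul_ne_top (by norm_num) hvol_ne) ENNReal.ofReal_ne_top
    · exact ENNReal.mul_ne_top (ENNReal.mul_ne_top hRne hc8ne)
        (ENNReal.mul_ne_top (ENNReal.mul_ne_top (by norm_num) hvol_ne) ENNReal.ofReal_ne_top)
  have main_real : M * Iv ≤ 2 * volR * Iρ + Rr * (8*N^2) * (8 * volR * Igr) := by
    have h := ENNReal.toReal_mono hrhs_ne main
    rw [hA] at h
    rw [ENNReal.toReal_mul, ENNReal.toReal_ofReal hM.le, ENNReal.toReal_ofReal hIv0] at h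
    rw [ENNReal.toReal_add (ENNReal.mul_ne_top (ENNReal.mul_ne_top (by norm_num) hvol_ne)
        ENNReal.ofReal_ne_top)
      (ENNReal.mul_ne_top (ENNReal.mul_ne_top hRne hc8ne)
        (ENNReal.mul_ne_top (ENNReal.mul_ne_top (by norm_num) hvol_ne)
          ENNReal.ofReal_ne_top))] at h
    simp only [ENNReal.toReal_mul, ENNReal.toReal_ofReal hIρ0, ENNReal.toReal_ofReal hIg0,
      ENNReal.toReal_ofReal (show (0:ℝ) ≤ 8*N^2 by positivity), ENNReal.toReal_ofNat] at h
    rw [hc8, ENNReal.toReal_ofReal (show (0:ℝ) ≤ 8*N^2 by positivity)] at h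
    exact h
  -- final algebra
  have hdiv : Iv ≤ (2 * volR / M) * Iρ + (64 * N^2 * volR / M) * (Rr * Igr) := by
    have h2 : Iv ≤ (2 * volR * Iρ + Rr * (8*N^2) * (8 * volR * Igr)) / M := by
      rw [le_div_iff₀ hM, mul_comm]; exact main_real
    calc Iv ≤ _ := h2
      _ = (2 * volR / M) * Iρ + (64 * N^2 * volR / M) * (Rr * Igr) := by
        field_simp; ring
  rw [← Real.sqrt_eq_rpow, ← Real.sqrt_eq_rpow, ← Real.sqrt_eq_rpow, ← Real.sqrt_eq_rpow]
  set a := 2 * volR / M with hadef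
  set b := 64 * N^2 * volR / M with hbdef
  have ha0 : 0 ≤ a := by positivity
  have hb0 : 0 ≤ b := by positivity
  set C := Real.sqrt a + Real.sqrt b + 1 with hCdef
  have hC0 : 0 ≤ C := by positivity
  have hCa : Real.sqrt a ≤ C := by
    have := Real.sqrt_nonneg b; rw [hCdef]; linarith
  have hCb : Real.sqrt b ≤ C := by
    have := Real.sqrt_nonneg a; rw [hCdef]; linarith
  calc Real.sqrt Iv ≤ Real.sqrt (a * Iρ + b * (Rr * Igr)) := Real.sqrt_le_sqrt hdiv
    _ ≤ Real.sqrt (a * Iρ) + Real.sqrt (b * (Rr * Igr)) :=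
        my_sqrt_add_le _ _ (by positivity) (by positivity)
    _ = Real.sqrt a * Real.sqrt Iρ + Real.sqrt b * (Real.sqrt Rr * Real.sqrt Igr) := by
        rw [Real.sqrt_mul ha0, Real.sqrt_mul hb0, Real.sqrt_mul hRr0]
    _ ≤ C * Real.sqrt Iρ + C * (Real.sqrt Rr + 1) * Real.sqrt Igr := by
        have h1 : Real.sqrt a * Real.sqrt Iρ ≤ C * Real.sqrt Iρ :=
          mul_le_mul_of_nonneg_right hCa (Real.sqrt_nonneg _)
        have h2 : Real.sqrt b * (Real.sqrt Rr * Real.sqrt Igr) ≤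
            C * (Real.sqrt Rr + 1) * Real.sqrt Igr := by
          rw [← mul_assoc]
          apply mul_le_mul_of_nonneg_right _ (Real.sqrt_nonneg _)
          calc Real.sqrt b * Real.sqrt Rr ≤ C * Real.sqrt Rr :=
                mul_le_mul_of_nonneg_right hCb (Real.sqrt_nonneg _)
            _ ≤ C * (Real.sqrt Rr + 1) := by
                apply mul_le_mul_of_nonneg_left (by linarith) hC0
        linarith
end
end

section
/- (Cancellation property of the momentum flux in ℝ².) Let μ > 0 and μ + λ ≥ 0. Let u : ℝ² → ℝ² be twice continuously differentiable with ∇u ∈ L²(ℝ²), and let P : ℝ² → ℝ be continuously differentiable with P ∈ L²(ℝ²). If the vector field F := μΔu + (μ+λ)∇(div u) − ∇P is integrable on ℝ², then ∫_{ℝ²} F(x) dx = 0. -/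
open MeasureTheory Real Set Metric

noncomputable section

/-- The i-th standard basis vector of ℝ². -/
def e2 (i : Fin 2) : E2 := EuclideanSpace.single i (1 : ℝ)

/-- Divergence of a vector field on ℝ²: div u = ∂₁u¹ + ∂₂u². -/
def div2 (u : E2 → E2) (x : E2) : ℝ := ∑ i, fderiv ℝ u x (e2 i) i

/-- Componentwise Laplacian of a vector field: (Δu)ⁱ = ∑ⱼ ∂ⱼ∂ⱼuⁱ. -/
def lapVec (u : E2 → E2) (x : E2) (i : Fin 2) : ℝ :=
  ∑ j, fderiv ℝ (fun y => fderiv ℝ u y (e2 j) i) x (e2 j)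

/-- The momentum flux F = μΔu + (μ+λ)∇(div u) − ∇P. -/
def NSflux (μ lam : ℝ) (u : E2 → E2) (P : E2 → ℝ) (x : E2) : E2 :=
  (EuclideanSpace.equiv (Fin 2) ℝ).symm fun i =>
    μ * lapVec u x i + (μ + lam) * fderiv ℝ (div2 u) x (e2 i) - fderiv ℝ P x (e2 i)

theorem integral_div2_eq_zero (f : Fin 2 → E2 → ℝ) (hf : ∀ j, ContDiff ℝ 1 (f j))
    (hsupp : ∀ j, HasCompactSupport (f j)) :
    ∫ x : E2, ∑ j, fderiv ℝ (f j) x (e2 j) = 0 := by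
  classical
  set eqL : E2 ≃L[ℝ] (Fin 2 → ℝ) := EuclideanSpace.equiv (Fin 2) ℝ with heqL
  set G : Fin 2 → (Fin 2 → ℝ) → ℝ := fun j y => f j (eqL.symm y) with hG
  set G' : Fin 2 → (Fin 2 → ℝ) → ((Fin 2 → ℝ) →L[ℝ] ℝ) :=
    fun j y => (fderiv ℝ (f j) (eqL.symm y)).comp (eqL.symm : (Fin 2 → ℝ) →L[ℝ] E2) with hG'
  have hdifff : ∀ j (x : E2), DifferentiableAt ℝ (f j) x := fun j x =>
    (hf j).differentiable one_ne_zero x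
  have hderivG : ∀ j y, HasFDerivAt (G j) (G' j y) y := fun j y =>
    ((hdifff j _).hasFDerivAt).comp y eqL.symm.hasFDerivAt
  have hsuppG : ∀ j, HasCompactSupport (G j) := fun j =>
    (hsupp j).comp_homeomorph eqL.symm.toHomeomorph
  obtain ⟨R0, hR0⟩ := ((hsuppG 0).union (hsuppG 1)).isBounded.subset_closedBall 0
  set R : ℝ := max R0 0 + 1 with hRdef
  have hRpos : (0:ℝ) < R := by positivity
  have hsub : ∀ j, tsupport (G j) ⊆ ball 0 R := by
    intro j x hx
    have hx2 : x ∈ tsupport (G 0) ∪ tsupport (G 1) := by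
      fin_cases j
      · exact Or.inl hx
      · exact Or.inr hx
    have := hR0 hx2
    rw [mem_closedBall, dist_zero_right] at this
    rw [mem_ball, dist_zero_right]
    calc ‖x‖ ≤ R0 := this
      _ ≤ max R0 0 := le_max_left _ _
      _ < R := by rw [hRdef]; linarith
  have hGzero : ∀ j y, y ∉ ball (0 : Fin 2 → ℝ) R → G j y = 0 := fun j y hy =>
    image_eq_zero_of_notMem_tsupport (fun h => hy (hsub j h))
  have hG'zero : ∀ j y, y ∉ ball (0 : Fin 2 → ℝ) R → G' j y = 0 := by
    intro j y hy
    have h0 : y ∉ tsupport (G j) := fun h => hy (hsub j h)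
    have hz : fderiv ℝ (G j) y = 0 := by
      by_contra h
      exact h0 (support_fderiv_subset ℝ (by simpa [Function.mem_support] using h))
    rw [← (hderivG j y).fderiv, hz]
  have hcont : Continuous fun y => ∑ j, G' j y (Pi.single j 1) := by
    apply continuous_finset_sum
    intro j _
    have h1 : Continuous fun y => fderiv ℝ (f j) (eqL.symm y) :=
      ((hf j).continuous_fderiv one_ne_zero).comp eqL.symm.continuous
    exact ((h1.clm_apply continuous_const))
  have hdivzero : ∀ y, y ∉ ball (0 : Fin 2 → ℝ) R →
      (∑ j, G' j y (Pi.single j 1)) = 0 := by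
    intro y hy
    refine Finset.sum_eq_zero fun j _ => ?_
    rw [hG'zero j y hy]
    rfl
  set a : Fin 2 → ℝ := fun _ => -R with ha
  set b : Fin 2 → ℝ := fun _ => R with hb
  have hle : a ≤ b := fun i => by
    simp only [ha, hb]
    linarith
  have hball_sub : ball (0 : Fin 2 → ℝ) R ⊆ Icc a b := by
    intro y hy
    rw [mem_ball, dist_zero_right] at hy
    constructor <;> intro i <;>
    · have h1 : |y i| ≤ ‖y‖ := by
        rw [← Real.norm_eq_abs]; exact norm_le_pi_norm y i
      have h2 := abs_le.1 (le_of_lt (lt_of_le_of_lt h1 hy))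
      simp only [ha, hb]
      first
      | exact h2.1
      | exact h2.2
  have key := integral_divergence_of_hasFDerivAt_off_countable' a b hle G G' ∅
    countable_empty (fun j => ((hf j).continuous.comp eqL.symm.continuous).continuousOn)
    (fun x _ j => hderivG j x)
    ((hcont.continuousOn).integrableOn_compact isCompact_Icc)
  have hext : ∫ y, ∑ j, G' j y (Pi.single j 1) = ∫ y in Icc a b, ∑ j, G' j y (Pi.single j 1) := by
    rw [setIntegral_eq_integral_of_forall_compl_eq_zero]
    intro y hy
    exact hdivzero y (fun hmem => hy (hball_sub hmem))
  have hfaces : ∀ (i : Fin 2) (c : ℝ), |c| = R → ∀ x : Fin 1 → ℝ,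
      G i ((Fin.insertNth i c x : Fin 2 → ℝ)) = 0 := by
    intro i c hc x
    apply hGzero
    rw [mem_ball, dist_zero_right]
    intro hlt
    have h1 : |(Fin.insertNth i c x : Fin 2 → ℝ) i| ≤ ‖(Fin.insertNth i c x : Fin 2 → ℝ)‖ := by
      rw [← Real.norm_eq_abs]; exact norm_le_pi_norm _ i
    rw [Fin.insertNth_apply_same, hc] at h1
    exact absurd (lt_of_le_of_lt h1 hlt) (lt_irrefl R)
  have hb' : ∀ i : Fin 2, |b i| = R := fun i => by simp [hb, abs_of_pos hRpos]
  have ha' : ∀ i : Fin 2, |a i| = R := fun i => by simp [ha, abs_of_pos hRpos]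
  have hmp := EuclideanSpace.volume_preserving_symm_measurableEquiv_toLp (Fin 2)
  have htransfer : ∫ x : E2, ∑ j, fderiv ℝ (f j) x (e2 j)
      = ∫ y, ∑ j, G' j y (Pi.single j 1) := by
    rw [← hmp.integral_comp (MeasurableEquiv.toLp 2 (Fin 2 → ℝ)).symm.measurableEmbedding]
    congr 1
  rw [htransfer, hext, key]
  refine Finset.sum_eq_zero fun i _ => ?_
  rw [setIntegral_congr_fun measurableSet_Icc (fun x _ => hfaces i (b i) (hb' i) x),
    setIntegral_congr_fun measurableSet_Icc (fun x _ => hfaces i (a i) (ha' i) x)]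
  simp

/-- Evaluation functional A ↦ (A v) k. -/
def evalCLM (v : E2) (k : Fin 2) : (E2 →L[ℝ] E2) →L[ℝ] ℝ :=
  (EuclideanSpace.proj k).comp (ContinuousLinearMap.apply ℝ E2 v)

theorem comp_eval (u : E2 → E2) (v : E2) (k : Fin 2) :
    (fun y => fderiv ℝ u y v k) = (evalCLM v k) ∘ (fderiv ℝ u) := rfl

theorem contDiff_dcomp (u : E2 → E2) (hu : ContDiff ℝ 2 u) (v : E2) (k : Fin 2) :
    ContDiff ℝ 1 (fun y => fderiv ℝ u y v k) := by
  rw [comp_eval]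
  exact (evalCLM v k).contDiff.comp (hu.fderiv_right le_rfl)

theorem fderiv_dcomp (u : E2 → E2) (hu : ContDiff ℝ 2 u) (x v : E2) (k : Fin 2) :
    fderiv ℝ (fun y => fderiv ℝ u y v k) x
      = (evalCLM v k).comp (fderiv ℝ (fderiv ℝ u) x) := by
  have hdu : DifferentiableAt ℝ (fderiv ℝ u) x :=
    ((hu.fderiv_right (m := 1) le_rfl).differentiable one_ne_zero) x
  rw [comp_eval]
  exact ((evalCLM v k).hasFDerivAt.comp x hdu.hasFDerivAt).fderiv

theorem swap_second (u : E2 → E2) (hu : ContDiff ℝ 2 u) (x v w : E2) (k : Fin 2) :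
    fderiv ℝ (fun y => fderiv ℝ u y v k) x w = fderiv ℝ (fun y => fderiv ℝ u y w k) x v := by
  have hdu : DifferentiableAt ℝ (fderiv ℝ u) x :=
    ((hu.fderiv_right (m := 1) le_rfl).differentiable one_ne_zero) x
  rw [fderiv_dcomp u hu x v k, fderiv_dcomp u hu x w k]
  have hsymm := second_derivative_symmetric
    (f := u) (f' := fderiv ℝ u) (f'' := fderiv ℝ (fderiv ℝ u) x)
    (fun y => ((hu.differentiable two_ne_zero) y).hasFDerivAt) hdu.hasFDerivAt v w
  simp only [evalCLM, ContinuousLinearMap.comp_apply, ContinuousLinearMap.apply_apply]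
  rw [← hsymm]

theorem flux_component (μ lam : ℝ) (u : E2 → E2) (hu : ContDiff ℝ 2 u)
    (P : E2 → ℝ) (hP : ContDiff ℝ 1 P) (i : Fin 2) (x : E2) :
    μ * lapVec u x i + (μ + lam) * fderiv ℝ (div2 u) x (e2 i) - fderiv ℝ P x (e2 i)
      = ∑ j, fderiv ℝ (fun y => μ * fderiv ℝ u y (e2 j) i
          + (μ + lam) * fderiv ℝ u y (e2 i) j - (if j = i then P y else 0)) x (e2 j) := by
  classical
  have hgder : ∀ j : Fin 2, fderiv ℝ (fun y => μ * fderiv ℝ u y (e2 j) i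
      + (μ + lam) * fderiv ℝ u y (e2 i) j - (if j = i then P y else 0)) x
      = μ • fderiv ℝ (fun y => fderiv ℝ u y (e2 j) i) x
        + (μ + lam) • fderiv ℝ (fun y => fderiv ℝ u y (e2 i) j) x
        - (if j = i then fderiv ℝ P x else 0) := by
    intro j
    have hA : HasFDerivAt (fun y => fderiv ℝ u y (e2 j) i)
        (fderiv ℝ (fun y => fderiv ℝ u y (e2 j) i) x) x :=
      (((contDiff_dcomp u hu (e2 j) i).differentiable one_ne_zero) x).hasFDerivAt
    have hB : HasFDerivAt (fun y => fderiv ℝ u y (e2 i) j)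
        (fderiv ℝ (fun y => fderiv ℝ u y (e2 i) j) x) x :=
      (((contDiff_dcomp u hu (e2 i) j).differentiable one_ne_zero) x).hasFDerivAt
    have hD : HasFDerivAt (fun y => if j = i then P y else 0)
        (if j = i then fderiv ℝ P x else 0) x := by
      by_cases h : j = i
      · simp only [h, if_true]
        exact ((hP.differentiable one_ne_zero) x).hasFDerivAt
      · simp only [h, if_false]
        exact hasFDerivAt_const 0 x
    exact (((hA.const_mul μ).add (hB.const_mul (μ + lam))).sub hD).fderiv
  have hsum : ∀ j : Fin 2, fderiv ℝ (fun y => μ * fderiv ℝ u y (e2 j) i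
      + (μ + lam) * fderiv ℝ u y (e2 i) j - (if j = i then P y else 0)) x (e2 j)
      = μ * fderiv ℝ (fun y => fderiv ℝ u y (e2 j) i) x (e2 j)
        + (μ + lam) * fderiv ℝ (fun y => fderiv ℝ u y (e2 j) j) x (e2 i)
        - (if j = i then fderiv ℝ P x (e2 j) else 0) := by
    intro j
    rw [hgder j]
    have hswap := swap_second u hu x (e2 i) (e2 j) j
    simp only [ContinuousLinearMap.sub_apply, ContinuousLinearMap.add_apply,
      ContinuousLinearMap.smul_apply, smul_eq_mul]
    rw [hswap]
    by_cases h : j = i <;> simp [h]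
  rw [Finset.sum_congr rfl (fun j _ => hsum j)]
  have hdivder : fderiv ℝ (div2 u) x
      = ∑ j, fderiv ℝ (fun y => fderiv ℝ u y (e2 j) j) x := by
    have : HasFDerivAt (div2 u) (∑ j, fderiv ℝ (fun y => fderiv ℝ u y (e2 j) j) x) x := by
      apply HasFDerivAt.fun_sum
      intro j _
      exact (((contDiff_dcomp u hu (e2 j) j).differentiable one_ne_zero) x).hasFDerivAt
    exact this.fderiv
  rw [Finset.sum_sub_distrib, Finset.sum_add_distrib, ← Finset.mul_sum, ← Finset.mul_sum]
  rw [Finset.sum_ite_eq' Finset.univ i (fun j => fderiv ℝ P x (e2 j))]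
  simp only [Finset.mem_univ, if_true]
  rw [hdivder]
  simp [lapVec, ContinuousLinearMap.sum_apply]

def bump2 : ContDiffBump (0 : E2) := ⟨1, 2, one_pos, one_lt_two⟩

def cutoff (R : ℝ) (x : E2) : ℝ := bump2 (R⁻¹ • x)

theorem cutoff_contDiff (R : ℝ) : ContDiff ℝ 1 (cutoff R) :=
  (ContDiffBump.contDiff (f := bump2)).comp (contDiff_id.const_smul R⁻¹)

theorem norm_inv_smul (R : ℝ) (hR : 0 < R) (x : E2) : ‖R⁻¹ • x‖ = R⁻¹ * ‖x‖ := by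
  rw [norm_smul, Real.norm_eq_abs, abs_of_pos (by positivity)]

theorem cutoff_one {R : ℝ} (hR : 0 < R) {x : E2} (h : ‖x‖ ≤ R) : cutoff R x = 1 := by
  apply bump2.one_of_mem_closedBall
  rw [mem_closedBall, dist_zero_right, norm_inv_smul R hR]
  show R⁻¹ * ‖x‖ ≤ bump2.rIn
  have : bump2.rIn = 1 := rfl
  rw [this]
  rw [inv_mul_le_iff₀ hR]
  nlinarith

theorem cutoff_zero {R : ℝ} (hR : 0 < R) {x : E2} (h : 2 * R < ‖x‖) : cutoff R x = 0 := by
  have : R⁻¹ • x ∉ Function.support (⇑bump2) := by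
    rw [bump2.support_eq]
    rw [mem_ball, dist_zero_right, norm_inv_smul R hR]
    show ¬ R⁻¹ * ‖x‖ < bump2.rOut
    have h2 : bump2.rOut = 2 := rfl
    rw [h2, not_lt, inv_mul_eq_div, le_div_iff₀ hR]
    linarith
  exact Function.notMem_support.mp this

theorem cutoff_hcs {R : ℝ} (hR : 0 < R) : HasCompactSupport (cutoff R) := by
  apply HasCompactSupport.intro (isCompact_closedBall (0 : E2) (2 * R))
  intro x hx
  rw [mem_closedBall, dist_zero_right, not_le] at hx
  exact cutoff_zero hR hx

theorem cutoff_nonneg (R : ℝ) (x : E2) : 0 ≤ cutoff R x := bump2.nonneg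

theorem cutoff_le_one (R : ℝ) (x : E2) : cutoff R x ≤ 1 := bump2.le_one

theorem cutoff_hasFDerivAt {R : ℝ} (hR : 0 < R) (x : E2) :
    HasFDerivAt (cutoff R) (R⁻¹ • fderiv ℝ (⇑bump2) (R⁻¹ • x)) x := by
  have hin : HasFDerivAt (fun y : E2 => R⁻¹ • y)
      (R⁻¹ • ContinuousLinearMap.id ℝ E2) x := (hasFDerivAt_id x).const_smul R⁻¹
  have hout : HasFDerivAt (⇑bump2) (fderiv ℝ (⇑bump2) (R⁻¹ • x)) (R⁻¹ • x) :=
    (((ContDiffBump.contDiff (f := bump2) (n := 1)).differentiable (by simp)) _).hasFDerivAt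
  have := hout.comp x hin
  refine this.congr_fderiv ?_
  ext v
  simp [ContinuousLinearMap.comp_apply, _root_.map_smul]
theorem cutoff_fderiv_norm_le {R C : ℝ} (hR : 0 < R)
    (hC : ∀ z : E2, ‖fderiv ℝ (⇑bump2) z‖ ≤ C) (x : E2) :
    ‖fderiv ℝ (cutoff R) x‖ ≤ R⁻¹ * C := by
  rw [(cutoff_hasFDerivAt hR x).fderiv, norm_smul, Real.norm_eq_abs,
    abs_of_pos (by positivity : (0:ℝ) < R⁻¹)]
  exact mul_le_mul_of_nonneg_left (hC _) (by positivity)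

theorem cutoff_fderiv_zero_inner {R : ℝ} (hR : 0 < R) {x : E2} (h : ‖x‖ < R) :
    fderiv ℝ (cutoff R) x = 0 := by
  have hev : cutoff R =ᶠ[nhds x] (fun _ => (1:ℝ)) := by
    filter_upwards [Metric.isOpen_ball.mem_nhds (by rwa [mem_ball, dist_zero_right])] with y hy
    exact cutoff_one hR (le_of_lt (by rwa [mem_ball, dist_zero_right] at hy))
  rw [hev.fderiv_eq, fderiv_fun_const]
  rfl

theorem cutoff_fderiv_zero_outer {R : ℝ} (hR : 0 < R) {x : E2} (h : 2 * R < ‖x‖) :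
    fderiv ℝ (cutoff R) x = 0 := by
  have hev : cutoff R =ᶠ[nhds x] (fun _ => (0:ℝ)) := by
    filter_upwards [(isOpen_lt continuous_const continuous_norm).mem_nhds
      (by simpa using h : x ∈ {y : E2 | 2 * R < ‖y‖})] with y hy
    exact cutoff_zero hR hy
  rw [hev.fderiv_eq, fderiv_fun_const]
  rfl

theorem exists_bump_deriv_bound : ∃ C : ℝ, 0 ≤ C ∧ ∀ z : E2, ‖fderiv ℝ (⇑bump2) z‖ ≤ C := by
  obtain ⟨C, hC⟩ := HasCompactSupport.exists_bound_of_continuous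
    (bump2.hasCompactSupport.fderiv (𝕜 := ℝ))
    ((ContDiffBump.contDiff (f := bump2) (n := 1)).continuous_fderiv (by simp))
  exact ⟨C, le_trans (norm_nonneg _) (hC 0), hC⟩

theorem comp_le_norm (v : E2) (k : Fin 2) : |v k| ≤ ‖v‖ := by
  rw [EuclideanSpace.norm_eq]
  rw [show |v k| = Real.sqrt ((v k) ^ 2) from (Real.sqrt_sq_eq_abs _).symm]
  apply Real.sqrt_le_sqrt
  have := Finset.single_le_sum (f := fun j => ‖v j‖ ^ 2)
    (fun j _ => by positivity) (Finset.mem_univ k)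
  simpa [Real.norm_eq_abs, sq_abs] using this

theorem cs_bound {R c : ℝ} (hR : 0 < R) (hc : 0 ≤ c) (h w : E2 → ℝ)
    (hcont : Continuous h) (hsq : Integrable (fun x => h x ^ 2))
    (hwcont : Continuous w)
    (hw_supp : ∀ x : E2, x ∉ closedBall (0:E2) (2*R) \ ball (0:E2) R → w x = 0)
    (hw_bd : ∀ x, |w x| ≤ c) :
    |∫ x, w x * h x| ≤ c * Real.sqrt ((volume (closedBall (0:E2) (2*R))).toReal)
      * Real.sqrt (∫ x in (ball (0:E2) R)ᶜ, h x ^ 2) := by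
  classical
  set A : Set E2 := closedBall (0:E2) (2*R) \ ball (0:E2) R with hA
  have hAmeas : MeasurableSet A := measurableSet_closedBall.diff measurableSet_ball
  have hAsub : A ⊆ closedBall (0:E2) (2*R) := diff_subset
  have hAfin : volume A < ⊤ :=
    lt_of_le_of_lt (measure_mono hAsub) (measure_closedBall_lt_top)
  haveI : IsFiniteMeasure (volume.restrict A) := by
    constructor
    rw [Measure.restrict_apply_univ]
    exact hAfin
  -- step 1: restrict the integral
  have h1 : ∫ x, w x * h x = ∫ x in A, w x * h x := by
    rw [setIntegral_eq_integral_of_forall_compl_eq_zero]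
    intro x hx
    rw [hw_supp x hx, zero_mul]
  -- step 2-4: triangle + pointwise bound
  have hInt_abs : IntegrableOn (fun x => c * |h x|) A := by
    apply IntegrableOn.mono_set _ hAsub
    exact ((continuous_const.mul hcont.abs).continuousOn.integrableOn_compact
      (isCompact_closedBall _ _))
  have h2 : |∫ x in A, w x * h x| ≤ ∫ x in A, c * |h x| := by
    refine le_trans (by simpa [Real.norm_eq_abs] using
      norm_integral_le_integral_norm (μ := volume.restrict A) (fun x => w x * h x)) ?_
    apply integral_mono_of_nonneg
      (Filter.Eventually.of_forall fun x => mul_nonneg (abs_nonneg _) (abs_nonneg _)) hInt_abs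
    apply Filter.Eventually.of_forall
    intro x
    exact mul_le_mul_of_nonneg_right (hw_bd x) (abs_nonneg _)
  have h3 : ∫ x in A, c * |h x| = c * ∫ x in A, |h x| := integral_const_mul c _
  -- step 5: Cauchy-Schwarz on A
  have hpq : Real.HolderConjugate 2 2 := by constructor <;> norm_num
  have h2e : (ENNReal.ofReal (2:ℝ)) = 2 := by norm_num
  have hmem_h : MemLp h (ENNReal.ofReal (2:ℝ)) (volume.restrict A) := by
    rw [h2e]
    exact (memLp_two_iff_integrable_sq hcont.aestronglyMeasurable.restrict).2 hsq.integrableOn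
  have hmem_1 : MemLp (fun _ : E2 => (1:ℝ)) (ENNReal.ofReal (2:ℝ)) (volume.restrict A) := by
    rw [h2e]
    exact memLp_const 1
  have hcs := integral_mul_norm_le_Lp_mul_Lq (μ := volume.restrict A)
    (f := h) (g := fun _ => (1:ℝ)) hpq hmem_h hmem_1
  have h5 : ∫ x in A, |h x| ≤ (∫ x in A, h x ^ 2) ^ (1/2 : ℝ)
      * ((volume A).toReal) ^ (1/2 : ℝ) := by
    have e1 : ∫ x in A, |h x| = ∫ x in A, ‖h x‖ * ‖(1:ℝ)‖ := by
      simp [Real.norm_eq_abs]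
    have e2 : ∫ x in A, ‖h x‖ ^ (2:ℝ) = ∫ x in A, h x ^ 2 := by
      apply integral_congr_ae
      apply Filter.Eventually.of_forall
      intro x
      show ‖h x‖ ^ (2:ℝ) = h x ^ 2
      rw [Real.norm_eq_abs, show |h x| ^ (2:ℝ) = |h x| ^ (2:ℕ) by norm_num, sq_abs]
    have e3 : ∫ x in A, ‖(1:ℝ)‖ ^ (2:ℝ) = (volume A).toReal := by
      simp [Real.norm_eq_abs]; rfl
    rw [e1]
    calc ∫ x in A, ‖h x‖ * ‖(1:ℝ)‖
        ≤ (∫ x in A, ‖h x‖ ^ (2:ℝ)) ^ (1/2 : ℝ) * (∫ x in A, ‖(1:ℝ)‖ ^ (2:ℝ)) ^ (1/2 : ℝ) := hcs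
      _ = (∫ x in A, h x ^ 2) ^ (1/2 : ℝ) * ((volume A).toReal) ^ (1/2 : ℝ) := by rw [e2, e3]
  -- step 6: monotonicity of tail and of measure
  have h6 : (∫ x in A, h x ^ 2) ≤ ∫ x in (ball (0:E2) R)ᶜ, h x ^ 2 := by
    apply setIntegral_mono_set hsq.integrableOn
      (Filter.Eventually.of_forall fun x => by positivity)
    exact Filter.Eventually.of_forall fun x (hx : x ∈ A) => hx.2
  have h7 : (volume A).toReal ≤ (volume (closedBall (0:E2) (2*R))).toReal :=
    ENNReal.toReal_mono (measure_closedBall_lt_top).ne (measure_mono hAsub)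
  -- combine
  have hnn1 : (0:ℝ) ≤ ∫ x in A, h x ^ 2 := integral_nonneg fun x => by positivity
  have hnn2 : (0:ℝ) ≤ (volume A).toReal := ENNReal.toReal_nonneg
  calc |∫ x, w x * h x| = |∫ x in A, w x * h x| := by rw [h1]
    _ ≤ ∫ x in A, c * |h x| := h2
    _ = c * ∫ x in A, |h x| := h3
    _ ≤ c * ((∫ x in A, h x ^ 2) ^ (1/2 : ℝ) * ((volume A).toReal) ^ (1/2 : ℝ)) :=
        mul_le_mul_of_nonneg_left h5 hc
    _ = c * (Real.sqrt (∫ x in A, h x ^ 2) * Real.sqrt ((volume A).toReal)) := by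
        rw [← Real.sqrt_eq_rpow, ← Real.sqrt_eq_rpow]
    _ ≤ c * (Real.sqrt (∫ x in (ball (0:E2) R)ᶜ, h x ^ 2)
          * Real.sqrt ((volume (closedBall (0:E2) (2*R))).toReal)) := by
        apply mul_le_mul_of_nonneg_left _ hc
        exact mul_le_mul (Real.sqrt_le_sqrt h6) (Real.sqrt_le_sqrt h7)
          (Real.sqrt_nonneg _) (Real.sqrt_nonneg _)
    _ = c * Real.sqrt ((volume (closedBall (0:E2) (2*R))).toReal)
          * Real.sqrt (∫ x in (ball (0:E2) R)ᶜ, h x ^ 2) := by ring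

/-- Cancellation property (3.9)/(zer) of the paper: if u is C² with ∇u ∈ L²(ℝ²), P is C¹
with P ∈ L²(ℝ²), and F = μΔu + (μ+λ)∇(div u) − ∇P is integrable, then ∫_{ℝ²} F dx = 0. -/
theorem momentum_flux_cancellation (μ lam : ℝ) (hμ : 0 < μ) (hlam : 0 ≤ μ + lam)
    (u : E2 → E2) (hu : ContDiff ℝ 2 u)
    (hgrad : Integrable (fun x => ‖fderiv ℝ u x‖ ^ 2))
    (P : E2 → ℝ) (hP : ContDiff ℝ 1 P) (hP2 : Integrable (fun x => (P x) ^ 2))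
    (hF : Integrable (NSflux μ lam u P)) :
    ∫ x : E2, NSflux μ lam u P x = 0 := by
  classical
  obtain ⟨C, hC0, hC⟩ := exists_bump_deriv_bound
  set V : ℝ := (volume (ball (0:E2) 1)).toReal with hV
  have hVnn : 0 ≤ V := ENNReal.toReal_nonneg
  have hcomp : ∀ i : Fin 2, (∫ x : E2, (NSflux μ lam u P x) i) = 0 := by
    intro i
    have hFi_int : Integrable (fun x => (NSflux μ lam u P x) i) :=
      (EuclideanSpace.proj (𝕜 := ℝ) i).integrable_comp hF
    set g : Fin 2 → E2 → ℝ := fun j y =>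
      μ * fderiv ℝ u y (e2 j) i + (μ + lam) * fderiv ℝ u y (e2 i) j
        - (if j = i then P y else 0) with hg
    have hFi : ∀ x, (NSflux μ lam u P x) i = ∑ j, fderiv ℝ (g j) x (e2 j) := by
      intro x
      have h0 : (NSflux μ lam u P x) i
          = μ * lapVec u x i + (μ + lam) * fderiv ℝ (div2 u) x (e2 i)
            - fderiv ℝ P x (e2 i) := rfl
      rw [h0, flux_component μ lam u hu P hP i x]
    have hgC1 : ∀ j, ContDiff ℝ 1 (g j) := by
      intro j
      apply ContDiff.sub
      · exact (contDiff_const.mul (contDiff_dcomp u hu (e2 j) i)).add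
          (contDiff_const.mul (contDiff_dcomp u hu (e2 i) j))
      · by_cases hji : j = i
        · simpa [hji] using hP
        · simpa [hji] using contDiff_const (c := (0:ℝ))
    have hgcont : ∀ j, Continuous (g j) := fun j => (hgC1 j).continuous
    have habs : ∀ j x, |g j x| ≤ (|μ| + |μ + lam|) * ‖fderiv ℝ u x‖ + |P x| := by
      intro j x
      have hb1 : ∀ (v : E2) (k : Fin 2), ‖v‖ ≤ 1 → |fderiv ℝ u x v k| ≤ ‖fderiv ℝ u x‖ := by
        intro v k hv
        calc |fderiv ℝ u x v k| ≤ ‖fderiv ℝ u x v‖ := comp_le_norm _ k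
          _ ≤ ‖fderiv ℝ u x‖ * ‖v‖ := (fderiv ℝ u x).le_opNorm _
          _ ≤ ‖fderiv ℝ u x‖ * 1 := by
              exact mul_le_mul_of_nonneg_left hv (norm_nonneg _)
          _ = ‖fderiv ℝ u x‖ := mul_one _
      have he2 : ∀ k : Fin 2, ‖e2 k‖ ≤ 1 := by
        intro k
        rw [show e2 k = EuclideanSpace.single k (1:ℝ) from rfl, EuclideanSpace.norm_single]
        simp
      have h1 := hb1 (e2 j) i (he2 j)
      have h2 := hb1 (e2 i) j (he2 i)
      have h3 : |if j = i then P x else 0| ≤ |P x| := by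
        by_cases hji : j = i <;> simp [hji]
      calc |g j x| ≤ |μ * fderiv ℝ u x (e2 j) i + (μ + lam) * fderiv ℝ u x (e2 i) j|
            + |if j = i then P x else 0| := abs_sub _ _
        _ ≤ |μ * fderiv ℝ u x (e2 j) i| + |(μ + lam) * fderiv ℝ u x (e2 i) j|
            + |if j = i then P x else 0| := by gcongr; exact abs_add_le _ _
        _ ≤ |μ| * ‖fderiv ℝ u x‖ + |μ + lam| * ‖fderiv ℝ u x‖ + |P x| := by
            rw [abs_mul, abs_mul]
            gcongr
        _ = (|μ| + |μ + lam|) * ‖fderiv ℝ u x‖ + |P x| := by ring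
    have hg_sq : ∀ j, Integrable (fun x => (g j x) ^ 2) := by
      intro j
      apply Integrable.mono
        ((hgrad.const_mul (2 * (|μ| + |μ + lam|) ^ 2)).add (hP2.const_mul 2))
        ((hgcont j).pow 2).aestronglyMeasurable
      apply Filter.Eventually.of_forall
      intro x
      have h1 := habs j x
      have hDnn : (0:ℝ) ≤ ‖fderiv ℝ u x‖ := norm_nonneg _
      rw [Real.norm_eq_abs, Real.norm_eq_abs, abs_of_nonneg (a := (g j ^ 2) x) (sq_nonneg (g j x))]
      have h2 : (g j x) ^ 2 ≤ ((|μ| + |μ + lam|) * ‖fderiv ℝ u x‖ + |P x|) ^ 2 := by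
        have := abs_nonneg (g j x)
        nlinarith [sq_abs (g j x)]
      have h3 : ((|μ| + |μ + lam|) * ‖fderiv ℝ u x‖ + |P x|) ^ 2
          ≤ 2 * (|μ| + |μ + lam|) ^ 2 * ‖fderiv ℝ u x‖ ^ 2 + 2 * (P x) ^ 2 := by
        nlinarith [sq_nonneg ((|μ| + |μ + lam|) * ‖fderiv ℝ u x‖ - |P x|), sq_abs (P x)]
      calc (g j x) ^ 2 ≤ 2 * (|μ| + |μ + lam|) ^ 2 * ‖fderiv ℝ u x‖ ^ 2 + 2 * (P x) ^ 2 :=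
            le_trans h2 h3
        _ ≤ |2 * (|μ| + |μ + lam|) ^ 2 * ‖fderiv ℝ u x‖ ^ 2 + 2 * (P x) ^ 2| := le_abs_self _
    -- integration by parts
    have hibp : ∀ R : ℝ, 0 < R →
        (∫ x, cutoff R x * (NSflux μ lam u P x) i)
          = - ∑ j, ∫ x, fderiv ℝ (cutoff R) x (e2 j) * g j x := by
      intro R hR
      have hχdiff : ∀ x : E2, DifferentiableAt ℝ (cutoff R) x :=
        fun x => ((cutoff_contDiff R).differentiable one_ne_zero) x
      have hprod : ∀ j, ContDiff ℝ 1 (fun x => cutoff R x * g j x) :=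
        fun j => (cutoff_contDiff R).mul (hgC1 j)
      have hprods : ∀ j, HasCompactSupport (fun x => cutoff R x * g j x) :=
        fun j => (cutoff_hcs hR).mul_right
      have hzero := integral_div2_eq_zero _ hprod hprods
      have hχd_cont : Continuous fun x => fderiv ℝ (cutoff R) x :=
        (cutoff_contDiff R).continuous_fderiv one_ne_zero
      have hχd_supp : HasCompactSupport fun x => fderiv ℝ (cutoff R) x :=
        (cutoff_hcs hR).fderiv (𝕜 := ℝ)
      have Ib : ∀ j, Integrable fun x => fderiv ℝ (cutoff R) x (e2 j) * g j x := by
        intro j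
        apply Continuous.integrable_of_hasCompactSupport
          ((hχd_cont.clm_apply continuous_const).mul (hgcont j))
        apply HasCompactSupport.intro (hχd_supp.isCompact)
        intro x hx
        have : fderiv ℝ (cutoff R) x = 0 := image_eq_zero_of_notMem_tsupport hx
        show fderiv ℝ (cutoff R) x (e2 j) * g j x = 0
        rw [this]
        simp
      have Ia : Integrable fun x => cutoff R x * (NSflux μ lam u P x) i := by
        apply Integrable.bdd_mul (c := 1) hFi_int
          (cutoff_contDiff R).continuous.aestronglyMeasurable
        apply Filter.Eventually.of_forall
        intro x
        rw [Real.norm_eq_abs, abs_of_nonneg (cutoff_nonneg R x)]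
        exact cutoff_le_one R x
      have hptw : (fun x => ∑ j, fderiv ℝ (fun y => cutoff R y * g j y) x (e2 j))
          = fun x => cutoff R x * (NSflux μ lam u P x) i
            + ∑ j, fderiv ℝ (cutoff R) x (e2 j) * g j x := by
        funext x
        have hder : ∀ j, fderiv ℝ (fun y => cutoff R y * g j y) x (e2 j)
            = cutoff R x * fderiv ℝ (g j) x (e2 j)
              + fderiv ℝ (cutoff R) x (e2 j) * g j x := by
          intro j
          rw [fderiv_fun_mul (hχdiff x) (((hgC1 j).differentiable one_ne_zero) x)]
          simp only [ContinuousLinearMap.add_apply, ContinuousLinearMap.smul_apply, smul_eq_mul]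
          ring
        calc ∑ j, fderiv ℝ (fun y => cutoff R y * g j y) x (e2 j)
            = ∑ j, (cutoff R x * fderiv ℝ (g j) x (e2 j)
                + fderiv ℝ (cutoff R) x (e2 j) * g j x) :=
              Finset.sum_congr rfl fun j _ => hder j
          _ = cutoff R x * (∑ j, fderiv ℝ (g j) x (e2 j))
                + ∑ j, fderiv ℝ (cutoff R) x (e2 j) * g j x := by
              rw [Finset.sum_add_distrib, Finset.mul_sum]
          _ = cutoff R x * (NSflux μ lam u P x) i
                + ∑ j, fderiv ℝ (cutoff R) x (e2 j) * g j x := by rw [← hFi x]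
      rw [hptw, integral_add Ia (integrable_finset_sum _ (fun j _ => Ib j)),
        integral_finset_sum _ (fun j _ => Ib j)] at hzero
      linarith
    -- limit of cutoff integrals
    have hlim1 : Filter.Tendsto (fun n : ℕ => ∫ x, cutoff ((n:ℝ)+1) x * (NSflux μ lam u P x) i)
        Filter.atTop (nhds (∫ x, (NSflux μ lam u P x) i)) := by
      apply tendsto_integral_of_dominated_convergence
        (bound := fun x => |(NSflux μ lam u P x) i|)
      · intro n
        exact (((cutoff_contDiff _).continuous.aestronglyMeasurable).mul hFi_int.1)
      · exact hFi_int.abs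
      · intro n
        apply Filter.Eventually.of_forall
        intro x
        rw [Real.norm_eq_abs, abs_mul]
        calc |cutoff ((n:ℝ)+1) x| * |(NSflux μ lam u P x) i|
            ≤ 1 * |(NSflux μ lam u P x) i| := by
              apply mul_le_mul_of_nonneg_right _ (abs_nonneg _)
              rw [abs_of_nonneg (cutoff_nonneg _ x)]
              exact cutoff_le_one _ x
          _ = |(NSflux μ lam u P x) i| := one_mul _
      · apply Filter.Eventually.of_forall
        intro x
        apply Filter.Tendsto.congr' _ tendsto_const_nhds
        rw [Filter.EventuallyEq, Filter.eventually_atTop]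
        refine ⟨⌈‖x‖⌉₊, fun n hn => ?_⟩
        have h1 : ‖x‖ ≤ (n:ℝ) + 1 := by
          calc ‖x‖ ≤ (⌈‖x‖⌉₊ : ℝ) := Nat.le_ceil _
            _ ≤ (n:ℝ) := Nat.cast_le.2 hn
            _ ≤ (n:ℝ) + 1 := by linarith
        rw [cutoff_one (by positivity) h1, one_mul]
    -- limit of the boundary terms
    have hlim2 : ∀ j : Fin 2, Filter.Tendsto
        (fun n : ℕ => ∫ x, fderiv ℝ (cutoff ((n:ℝ)+1)) x (e2 j) * g j x)
        Filter.atTop (nhds 0) := by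
      intro j
      -- tail of the L² integral tends to zero
      have htail : Filter.Tendsto
          (fun n : ℕ => ∫ x in (ball (0:E2) ((n:ℝ)+1))ᶜ, g j x ^ 2)
          Filter.atTop (nhds 0) := by
        have hmono : Monotone fun n : ℕ => ball (0:E2) ((n:ℝ)+1) := by
          intro m n hmn
          apply ball_subset_ball
          have : (m:ℝ) ≤ (n:ℝ) := Nat.cast_le.2 hmn
          linarith
        have hunion : ⋃ n : ℕ, ball (0:E2) ((n:ℝ)+1) = univ := by
          apply eq_univ_of_forall
          intro x
          obtain ⟨n, hn⟩ := exists_nat_gt ‖x‖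
          exact mem_iUnion.2 ⟨n, by
            rw [mem_ball, dist_zero_right]
            linarith⟩
        have h1 := tendsto_setIntegral_of_monotone (fun n => measurableSet_ball) hmono
          (by rw [hunion]; exact (hg_sq j).integrableOn)
        rw [hunion, setIntegral_univ] at h1
        have h2 : ∀ n : ℕ, ∫ x in (ball (0:E2) ((n:ℝ)+1))ᶜ, g j x ^ 2
            = (∫ x, g j x ^ 2) - ∫ x in ball (0:E2) ((n:ℝ)+1), g j x ^ 2 := by
          intro n
          have := integral_add_compl (measurableSet_ball
            (x := (0:E2)) (ε := (n:ℝ)+1)) (hg_sq j)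
          linarith
        simp_rw [h2]
        have := Filter.Tendsto.sub (tendsto_const_nhds
          (x := ∫ x, g j x ^ 2) (f := Filter.atTop (α := ℕ))) h1
        simpa using this
      -- bound each term via Cauchy-Schwarz
      have hbd : ∀ n : ℕ, |∫ x, fderiv ℝ (cutoff ((n:ℝ)+1)) x (e2 j) * g j x|
          ≤ 2 * C * Real.sqrt V
            * Real.sqrt (∫ x in (ball (0:E2) ((n:ℝ)+1))ᶜ, g j x ^ 2) := by
        intro n
        set R : ℝ := (n:ℝ) + 1 with hRdef
        have hR : 0 < R := by positivity
        have hcsb := cs_bound (R := R) (c := R⁻¹ * C) hR (by positivity)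
          (g j) (fun x => fderiv ℝ (cutoff R) x (e2 j)) (hgcont j) (hg_sq j)
          ((((cutoff_contDiff R).continuous_fderiv one_ne_zero).clm_apply continuous_const))
          (by
            intro x hx
            simp only [mem_diff, mem_closedBall, mem_ball, dist_zero_right, not_and, not_not] at hx
            show (fderiv ℝ (cutoff R) x) (e2 j) = 0
            by_cases h1 : ‖x‖ ≤ 2 * R
            · rw [cutoff_fderiv_zero_inner hR (hx h1)]
              simp
            · rw [cutoff_fderiv_zero_outer hR (not_le.1 h1)]
              simp)
          (by
            intro x
            calc |fderiv ℝ (cutoff R) x (e2 j)| ≤ ‖fderiv ℝ (cutoff R) x‖ * ‖e2 j‖ := by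
                  rw [← Real.norm_eq_abs]
                  exact (fderiv ℝ (cutoff R) x).le_opNorm _
              _ ≤ (R⁻¹ * C) * 1 := by
                  apply mul_le_mul (cutoff_fderiv_norm_le hR hC x) _ (norm_nonneg _)
                    (by positivity)
                  rw [show e2 j = EuclideanSpace.single j (1:ℝ) from rfl,
                    EuclideanSpace.norm_single]
                  simp
              _ = R⁻¹ * C := mul_one _)
        -- compute the volume factor
        have hvol : (volume (closedBall (0:E2) (2*R))).toReal = (2*R)^2 * V := by
          rw [Measure.addHaar_closedBall (μ := volume) (0:E2) (by positivity : (0:ℝ) ≤ 2*R),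
            finrank_euclideanSpace_fin, ENNReal.toReal_mul,
            ENNReal.toReal_ofReal (by positivity)]
        calc |∫ x, fderiv ℝ (cutoff R) x (e2 j) * g j x|
            ≤ (R⁻¹ * C) * Real.sqrt ((volume (closedBall (0:E2) (2*R))).toReal)
              * Real.sqrt (∫ x in (ball (0:E2) R)ᶜ, g j x ^ 2) := hcsb
          _ = (R⁻¹ * C) * (2 * R * Real.sqrt V)
              * Real.sqrt (∫ x in (ball (0:E2) R)ᶜ, g j x ^ 2) := by
              rw [hvol, Real.sqrt_mul (by positivity), Real.sqrt_sq (by positivity)]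
          _ = 2 * C * Real.sqrt V * Real.sqrt (∫ x in (ball (0:E2) R)ᶜ, g j x ^ 2) := by
              field_simp
      have hnorm : ∀ n : ℕ, ‖∫ x, fderiv ℝ (cutoff ((n:ℝ)+1)) x (e2 j) * g j x‖
          ≤ 2 * C * Real.sqrt V * Real.sqrt (∫ x in (ball (0:E2) ((n:ℝ)+1))ᶜ, g j x ^ 2) := by
        intro n
        rw [Real.norm_eq_abs]
        exact hbd n
      have hs := (Real.continuous_sqrt.tendsto 0).comp htail
      rw [Real.sqrt_zero] at hs
      have hb0 := hs.const_mul (2 * C * Real.sqrt V)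
      rw [mul_zero] at hb0
      exact squeeze_zero_norm hnorm hb0
    -- combine
    have hfinal : Filter.Tendsto (fun n : ℕ => ∫ x, cutoff ((n:ℝ)+1) x * (NSflux μ lam u P x) i)
        Filter.atTop (nhds 0) := by
      have heq : (fun n : ℕ => ∫ x, cutoff ((n:ℝ)+1) x * (NSflux μ lam u P x) i)
          = fun n : ℕ => - ∑ j, ∫ x, fderiv ℝ (cutoff ((n:ℝ)+1)) x (e2 j) * g j x := by
        funext n
        exact hibp ((n:ℝ)+1) (by positivity)
      rw [heq]
      have hsum : Filter.Tendsto
          (fun n : ℕ => ∑ j, ∫ x, fderiv ℝ (cutoff ((n:ℝ)+1)) x (e2 j) * g j x)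
          Filter.atTop (nhds 0) := by
        have := tendsto_finset_sum (Finset.univ : Finset (Fin 2)) (fun j _ => hlim2 j)
        simpa using this
      simpa using hsum.neg
    exact tendsto_nhds_unique hlim1 hfinal
  -- assemble the vector statement
  have hproj : ∀ i : Fin 2, (∫ x : E2, NSflux μ lam u P x) i = 0 := by
    intro i
    have := ((EuclideanSpace.proj (𝕜 := ℝ) i).integral_comp_comm hF).symm
    calc (∫ x : E2, NSflux μ lam u P x) i
        = EuclideanSpace.proj (𝕜 := ℝ) i (∫ x : E2, NSflux μ lam u P x) := rfl
      _ = ∫ x : E2, EuclideanSpace.proj (𝕜 := ℝ) i (NSflux μ lam u P x) := by rw [this]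
      _ = ∫ x : E2, (NSflux μ lam u P x) i := rfl
      _ = 0 := hcomp i
  ext i
  exact hproj i
end
end
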